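/- Let 0 < α < 1, set ω(p) := p^α·cos(απ/2) for p ≥ 0 and ϖ(z) := e^{−iαπ/2}·(z+i)^α, where (·)^α is the principal complex power. Then: (i) ω is monotone increasing on [0,∞) and subadditive, i.e. ω(p+q) ≤ ω(p) + ω(q) for all p,q ≥ 0; (ii) ∫₀^∞ ω(p)/(1+p²) dp < ∞; (iii) Re ϖ(p) = Re ϖ(−p) for all real p; (iv) for all z ∈ ℂ with Im z ≥ 0 one has ω(|z|) ≤ Re ϖ(z), and there exist constants c, d > 0 such that Re ϖ(z) ≤ c·ω(|z|) + d for all such z. -/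

import Mathlib

open MeasureTheory

lemma pik_key (α : ℝ) (z : ℂ) (hz : 0 < (z + Complex.I).im) :
    (Complex.exp (-(Complex.I * (α : ℂ) * (Real.pi : ℂ) / 2)) * (z + Complex.I) ^ (α : ℂ)).re
      = ‖z + Complex.I‖ ^ α *
        Real.cos (α * Complex.arg (z + Complex.I) - α * Real.pi / 2) := by
  have hne : z + Complex.I ≠ 0 := by
    intro h; rw [h] at hz; simp at hz
  rw [Complex.cpow_def_of_ne_zero hne, ← Complex.exp_add, Complex.exp_re]
  have hre : (-(Complex.I * (α : ℂ) * (Real.pi : ℂ) / 2) + Complex.log (z + Complex.I) * (α : ℂ)).re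
      = Real.log (‖z + Complex.I‖) * α := by
    simp [Complex.log_re, Complex.div_re]
  have him : (-(Complex.I * (α : ℂ) * (Real.pi : ℂ) / 2) + Complex.log (z + Complex.I) * (α : ℂ)).im
      = α * Complex.arg (z + Complex.I) - α * Real.pi / 2 := by
    simp [Complex.log_im, Complex.div_im]
    ring
  rw [hre, him, Real.rpow_def_of_pos (norm_pos_iff.mpr hne)]

lemma pik_rpow_subadd {x y α : ℝ} (hx : 0 ≤ x) (hy : 0 ≤ y) (h0 : 0 ≤ α) (h1 : α ≤ 1) :
    (x + y) ^ α ≤ x ^ α + y ^ α := by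
  have h := NNReal.rpow_add_le_add_rpow x.toNNReal y.toNNReal h0 h1
  rw [← Real.toNNReal_add hx hy] at h
  have h' := (NNReal.coe_le_coe).mpr h
  push_cast at h'
  rwa [Real.coe_toNNReal _ (by positivity), Real.coe_toNNReal x hx, Real.coe_toNNReal y hy] at h'

/-- The fractional-power example `ω(p) = p^α·cos(απ/2)`, `ϖ(z) = e^{−iαπ/2}·(z+i)^α` is an
analytic indicatrix. -/
theorem power_indicatrix (α : ℝ) (hα₀ : 0 < α) (hα₁ : α < 1)
    (ω : ℝ → ℝ) (hω : ∀ p : ℝ, ω p = p ^ α * Real.cos (α * Real.pi / 2))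
    (ϖ : ℂ → ℂ)
    (hϖ : ∀ z : ℂ, ϖ z =
      Complex.exp (-(Complex.I * (α : ℂ) * (Real.pi : ℂ) / 2)) * (z + Complex.I) ^ (α : ℂ)) :
    MonotoneOn ω (Set.Ici 0) ∧
    (∀ p q : ℝ, 0 ≤ p → 0 ≤ q → ω (p + q) ≤ ω p + ω q) ∧
    IntegrableOn (fun p : ℝ => ω p / (1 + p ^ 2)) (Set.Ici 0) ∧
    (∀ p : ℝ, (ϖ (p : ℂ)).re = (ϖ (-(p : ℂ))).re) ∧
    (∀ z : ℂ, 0 ≤ z.im → ω (‖z‖) ≤ (ϖ z).re) ∧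
    (∃ c d : ℝ, 0 < c ∧ 0 < d ∧ ∀ z : ℂ, 0 ≤ z.im →
      (ϖ z).re ≤ c * ω (‖z‖) + d) := by
  have hπ := Real.pi_pos
  have hcos : 0 < Real.cos (α * Real.pi / 2) := by
    apply Real.cos_pos_of_mem_Ioo
    constructor
    · nlinarith
    · nlinarith
  -- the key representation, for any z with 0 ≤ im z
  have key : ∀ z : ℂ, 0 ≤ z.im → (ϖ z).re
      = ‖z + Complex.I‖ ^ α *
        Real.cos (α * Complex.arg (z + Complex.I) - α * Real.pi / 2) := by
    intro z hz
    rw [hϖ z]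
    exact pik_key α z (by simp [Complex.add_im]; linarith)
  refine ⟨?_, ?_, ?_, ?_, ?_, ?_⟩
  · -- monotone
    intro p hp q hq hpq
    rw [hω, hω]
    exact mul_le_mul_of_nonneg_right (Real.rpow_le_rpow hp hpq hα₀.le) hcos.le
  · -- subadditive
    intro p q hp hq
    rw [hω, hω, hω, ← add_mul]
    exact mul_le_mul_of_nonneg_right (pik_rpow_subadd hp hq hα₀.le hα₁.le) hcos.le
  · -- integrable
    have hfe : (fun p : ℝ => ω p / (1 + p ^ 2))
        = fun p : ℝ => p ^ α * Real.cos (α * Real.pi / 2) / (1 + p ^ 2) := by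
      funext p; rw [hω]
    rw [hfe]
    have hcont : ∀ s : Set ℝ,
        ContinuousOn (fun p : ℝ => p ^ α * Real.cos (α * Real.pi / 2) / (1 + p ^ 2)) s := by
      intro s
      apply ContinuousOn.div
      · apply ContinuousOn.mul _ continuousOn_const
        intro x _
        exact ((Real.continuousAt_rpow_const x α (Or.inr hα₀.le)).continuousWithinAt)
      · fun_prop
      · intro x _; positivity
    have h1 : IntegrableOn
        (fun p : ℝ => p ^ α * Real.cos (α * Real.pi / 2) / (1 + p ^ 2)) (Set.Icc 0 1) :=
      (hcont _).integrableOn_compact isCompact_Icc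
    have h2 : IntegrableOn
        (fun p : ℝ => p ^ α * Real.cos (α * Real.pi / 2) / (1 + p ^ 2)) (Set.Ioi 1) := by
      have hint : IntegrableOn (fun p : ℝ => Real.cos (α * Real.pi / 2) * p ^ (α - 2))
          (Set.Ioi 1) :=
        (integrableOn_Ioi_rpow_of_lt (by linarith) one_pos).const_mul _
      refine hint.mono' ((hcont _).aestronglyMeasurable measurableSet_Ioi) ?_
      filter_upwards [ae_restrict_mem measurableSet_Ioi] with p hp
      have hp1 : (1 : ℝ) < p := hp
      have hp0 : (0 : ℝ) < p := by linarith
      rw [Real.norm_eq_abs, abs_of_nonneg (div_nonneg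
        (mul_nonneg (Real.rpow_nonneg hp0.le α) hcos.le) (by positivity))]
      rw [div_le_iff₀ (by positivity)]
      have : p ^ (α - 2) * (1 + p ^ 2) = p ^ α * (p ^ (2:ℝ) )⁻¹ * (1 + p^2) := by
        rw [Real.rpow_sub hp0, div_eq_mul_inv]
      calc p ^ α * Real.cos (α * Real.pi / 2)
          ≤ Real.cos (α * Real.pi / 2) * (p ^ (α-2) * p ^ 2) := by
            rw [mul_comm]
            apply mul_le_mul_of_nonneg_left _ hcos.le
            rw [← Real.rpow_two, ← Real.rpow_add hp0]
            norm_num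
        _ ≤ Real.cos (α * Real.pi / 2) * p ^ (α - 2) * (1 + p ^ 2) := by
            rw [mul_assoc]
            apply mul_le_mul_of_nonneg_left _ hcos.le
            apply mul_le_mul_of_nonneg_left _ (by positivity)
            linarith
    have hsub : Set.Ici (0:ℝ) ⊆ Set.Icc 0 1 ∪ Set.Ioi 1 := by
      intro x hx
      rcases le_or_gt x 1 with h | h
      · exact Or.inl ⟨hx, h⟩
      · exact Or.inr h
    exact (h1.union h2).mono_set hsub
  · -- symmetry
    intro p
    have harg : Complex.arg (-(p:ℂ) + Complex.I) = Real.pi - Complex.arg ((p:ℂ) + Complex.I) := by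
      have h1 : -(p:ℂ) + Complex.I = -(starRingEnd ℂ ((p:ℂ) + Complex.I)) := by
        simp [Complex.ext_iff]
      have him : ((starRingEnd ℂ) ((p:ℂ) + Complex.I)).im < 0 := by
        simp
      rw [h1, Complex.arg_neg_eq_arg_add_pi_of_im_neg him, Complex.arg_conj]
      have hne : Complex.arg ((p:ℂ) + Complex.I) ≠ Real.pi :=
        (Complex.arg_lt_pi_iff.mpr (Or.inr (by simp : ((p:ℂ) + Complex.I).im ≠ 0))).ne
      rw [if_neg hne]; ring
    have habs : ‖-(p:ℂ) + Complex.I‖ = ‖(p:ℂ) + Complex.I‖ := by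
      have h1 : -(p:ℂ) + Complex.I = -(starRingEnd ℂ ((p:ℂ) + Complex.I)) := by
        simp [Complex.ext_iff]
      rw [h1, norm_neg, Complex.norm_conj]
    rw [key _ (by simp), key _ (by simp), harg, habs]
    congr 1
    rw [← Real.cos_neg (α * (Real.pi - Complex.arg ((p:ℂ) + Complex.I)) - α * Real.pi / 2)]
    congr 1
    ring
  · -- lower bound
    intro z hz
    rw [key z hz, hω]
    have hne : z + Complex.I ≠ 0 := by
      intro h
      have : (z + Complex.I).im = 0 := by rw [h]; simp
      simp [Complex.add_im] at this; linarith
    have habs : ‖z‖ ≤ ‖z + Complex.I‖ := by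
      have h2 : (‖z‖) ^ 2 ≤ (‖z + Complex.I‖) ^ 2 := by
        rw [Complex.sq_norm, Complex.sq_norm]
        simp only [Complex.normSq_apply, Complex.add_re, Complex.add_im, Complex.I_re,
          Complex.I_im]
        nlinarith
      nlinarith [h2, norm_nonneg z, norm_nonneg (z + Complex.I)]
    have harg0 : 0 ≤ Complex.arg (z + Complex.I) := by
      rw [Complex.arg_nonneg_iff]
      simp [Complex.add_im]; linarith
    have hargpi : Complex.arg (z + Complex.I) ≤ Real.pi := Complex.arg_le_pi _
    have hcosle : Real.cos (α * Real.pi / 2)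
        ≤ Real.cos (α * Complex.arg (z + Complex.I) - α * Real.pi / 2) := by
      rw [← Real.cos_abs (α * Complex.arg (z + Complex.I) - α * Real.pi / 2)]
      apply Real.cos_le_cos_of_nonneg_of_le_pi (abs_nonneg _) (by nlinarith)
      rw [abs_le]
      constructor <;> nlinarith
    exact mul_le_mul (Real.rpow_le_rpow (norm_nonneg z) habs hα₀.le) hcosle hcos.le
      (by positivity)
  · -- upper bound
    refine ⟨(Real.cos (α * Real.pi / 2))⁻¹, 1, inv_pos.mpr hcos, one_pos, ?_⟩
    intro z hz
    rw [key z hz, hω]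
    have h1 : ‖z + Complex.I‖ ≤ ‖z‖ + 1 := by
      simpa using norm_add_le z Complex.I
    have h2 : ‖z + Complex.I‖ ^ α ≤ ‖z‖ ^ α + 1 := by
      calc ‖z + Complex.I‖ ^ α
          ≤ (‖z‖ + 1) ^ α :=
            Real.rpow_le_rpow (norm_nonneg _) h1 hα₀.le
        _ ≤ ‖z‖ ^ α + 1 ^ α :=
            pik_rpow_subadd (norm_nonneg z) zero_le_one hα₀.le hα₁.le
        _ = ‖z‖ ^ α + 1 := by rw [Real.one_rpow]
    have h3 : Real.cos (α * Complex.arg (z + Complex.I) - α * Real.pi / 2) ≤ 1 :=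
      Real.cos_le_one _
    calc ‖z + Complex.I‖ ^ α *
          Real.cos (α * Complex.arg (z + Complex.I) - α * Real.pi / 2)
        ≤ ‖z + Complex.I‖ ^ α * 1 := by
          apply mul_le_mul_of_nonneg_left h3 (by positivity)
      _ = ‖z + Complex.I‖ ^ α := mul_one _
      _ ≤ ‖z‖ ^ α + 1 := h2
      _ = (Real.cos (α * Real.pi / 2))⁻¹ *
            (‖z‖ ^ α * Real.cos (α * Real.pi / 2)) + 1 := by
          field_simp
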